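/- Let E be a topological graph, Y a closed subset of E^0_rg, and E_Y = (E_Y^0, E_Y^1, d_Y, r_Y) the associated topological graph. Then (E_Y^0)_fin = E^0_fin ∪ ω(Y), (E_Y^0)_sce = E^0_sce ∪ ω(Y), and (E_Y^0)_rg = E^0_rg, where the left-hand sides are computed in the topological graph E_Y. -/

import Mathlib

open Set Filter OnePoint

namespace TopGraphAux

/-- `E⁰_sce`: the open set of sources of a topological graph. -/
def graphSce {E0 E1 : Type*} [TopologicalSpace E0] (r : E1 → E0) : Set E0 :=
  (closure (Set.range r))ᶜ

/-- `E⁰_fin`: vertices having a neighborhood whose `r`-preimage is compact. -/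
def graphFin {E0 E1 : Type*} [TopologicalSpace E0] [TopologicalSpace E1] (r : E1 → E0) :
    Set E0 :=
  {v | ∃ V ∈ nhds v, IsCompact (r ⁻¹' V)}

/-- `E⁰_rg`: the open set of regular vertices of a topological graph. -/
def graphRg {E0 E1 : Type*} [TopologicalSpace E0] [TopologicalSpace E1] (r : E1 → E0) :
    Set E0 :=
  graphFin r \ closure (graphSce r)

/-- A factor map from the topological graph `F = (F0, F1, dF, rF)` to the topological graph
`E = (E0, E1, dE, rE)`: a pair of continuous maps between one-point compactifications sending
`∞` to `∞`, intertwining range and domain maps, and with the unique edge-lifting property. -/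
structure IsFactorMap {E0 E1 F0 F1 : Type*}
    [TopologicalSpace E0] [TopologicalSpace E1] [TopologicalSpace F0] [TopologicalSpace F1]
    (dE rE : E1 → E0) (dF rF : F1 → F0)
    (m0 : OnePoint F0 → OnePoint E0) (m1 : OnePoint F1 → OnePoint E1) : Prop where
  continuous_m0 : Continuous m0
  continuous_m1 : Continuous m1
  map_infty0 : m0 ∞ = ∞
  map_infty1 : m1 ∞ = ∞
  compat : ∀ (e : F1) (e' : E1), m1 ↑e = ↑e' →
    (↑(rE e') : OnePoint E0) = m0 ↑(rF e) ∧ (↑(dE e') : OnePoint E0) = m0 ↑(dF e)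
  lift : ∀ (e' : E1) (v : F0), (↑(dE e') : OnePoint E0) = m0 ↑v →
    ∃! e : F1, m1 ↑e = (↑e' : OnePoint E1) ∧ dF e = v

/-- Regularity of a factor map: every vertex mapping to a regular vertex receives an edge,
and all edges it receives are mapped to genuine edges. -/
def IsRegularFactorMap {E0 E1 F0 F1 : Type*}
    [TopologicalSpace E0] [TopologicalSpace E1] [TopologicalSpace F0] [TopologicalSpace F1]
    (rE : E1 → E0) (rF : F1 → F0)
    (m0 : OnePoint F0 → OnePoint E0) (m1 : OnePoint F1 → OnePoint E1) : Prop :=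
  ∀ (v : F0) (w : E0), m0 ↑v = ↑w → w ∈ graphRg rE →
    (∃ e : F1, rF e = v) ∧ ∀ e : F1, rF e = v → ∃ e' : E1, m1 ↑e = ↑e'

/-- `f` restricts to a homeomorphism from `U` onto `V`. -/
def IsHomeoOn {X Y : Type*} [TopologicalSpace X] [TopologicalSpace Y]
    (f : X → Y) (U : Set X) (V : Set Y) : Prop :=
  ∃ h : U ≃ₜ V, ∀ x : U, (h x : Y) = f (x : X)

/-- Extension of a map `A → OnePoint B` to the one-point compactification, sending `∞` to `∞`. -/
def onePointLift {A B : Type*} (f : A → OnePoint B) : OnePoint A → OnePoint B :=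
  fun x => Option.elim x ∞ f

/-- The relation identifying the copy in `S` of each point of `B ⊆ S` with the corresponding
point of `X`. -/
def glueRel {X : Type*} (S B : Set X) : (X ⊕ ↥S) → (X ⊕ ↥S) → Prop :=
  fun a b => ∃ x : ↥S, (x : X) ∈ B ∧
    ((a = Sum.inl ↑x ∧ b = Sum.inr x) ∨ (a = Sum.inr x ∧ b = Sum.inl ↑x))

/-- The space `X ⨿_B S` obtained from `X ⊔ S` by identifying the two copies of each point
of `B ⊆ S ⊆ X`. -/
def Glue (X : Type*) (S B : Set X) : Type _ := Quot (glueRel S B)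

instance {X : Type*} [TopologicalSpace X] (S B : Set X) : TopologicalSpace (Glue X S B) :=
  inferInstanceAs (TopologicalSpace (Quot _))

/-- The canonical inclusion `X → X ⨿_B S`. -/
def Glue.inl {X : Type*} {S B : Set X} (x : X) : Glue X S B := Quot.mk _ (Sum.inl x)

/-- The inclusion of the extra copy `S → X ⨿_B S`. -/
def Glue.inr {X : Type*} {S B : Set X} (x : ↥S) : Glue X S B := Quot.mk _ (Sum.inr x)

/-- The extension `d_Y` of the domain map `d` to the graph `E_Y`. -/
def glueD {E0 E1 : Type*} [TopologicalSpace E0] (d : E1 → E0) (Y : Set E0) :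
    Glue E1 (d ⁻¹' closure Y) (d ⁻¹' (closure Y \ Y)) → Glue E0 (closure Y) (closure Y \ Y) :=
  Quot.lift
    (Sum.elim (fun e => Glue.inl (d e)) (fun e => Glue.inr ⟨d e.1, e.2⟩))
    (by
      rintro a b ⟨x, hx, (⟨rfl, rfl⟩ | ⟨rfl, rfl⟩)⟩
      · exact Quot.sound ⟨⟨d x.1, x.2⟩, hx, Or.inl ⟨rfl, rfl⟩⟩
      · exact (Quot.sound ⟨⟨d x.1, x.2⟩, hx, Or.inl ⟨rfl, rfl⟩⟩).symm)

/-- The extension `r_Y` of the range map `r` to the graph `E_Y`. -/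
def glueR {E0 E1 : Type*} [TopologicalSpace E0] (d r : E1 → E0) (Y : Set E0) :
    Glue E1 (d ⁻¹' closure Y) (d ⁻¹' (closure Y \ Y)) → Glue E0 (closure Y) (closure Y \ Y) :=
  Quot.lift (Sum.elim (fun e => Glue.inl (r e)) (fun e => Glue.inl (r e.1)))
    (by rintro a b ⟨x, hx, (⟨rfl, rfl⟩ | ⟨rfl, rfl⟩)⟩ <;> rfl)

/-- The projection from the glued space back onto the original space. -/
def glueProj {X : Type*} (S B : Set X) : Glue X S B → X :=
  Quot.lift (Sum.elim id Subtype.val)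
    (by rintro a b ⟨x, hx, (⟨rfl, rfl⟩ | ⟨rfl, rfl⟩)⟩ <;> rfl)

/-- A point of the projective limit `E^i = Ẽ^i \ {∞}`: a compatible thread of points of the
one-point compactifications, not all equal to `∞`. -/
structure LimPt {Λ : Type*} [Preorder Λ] (X : Λ → Type*)
    (m : ∀ ⦃l l' : Λ⦄, l ≤ l' → OnePoint (X l') → OnePoint (X l)) where
  pt : ∀ l, OnePoint (X l)
  compat : ∀ ⦃l l' : Λ⦄ (h : l ≤ l'), m h (pt l') = pt l
  exists_ne_infty : ∃ l, pt l ≠ ∞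

instance {Λ : Type*} [Preorder Λ] (X : Λ → Type*) [∀ l, TopologicalSpace (X l)]
    (m : ∀ ⦃l l' : Λ⦄, l ≤ l' → OnePoint (X l') → OnePoint (X l)) :
    TopologicalSpace (LimPt X m) :=
  TopologicalSpace.induced LimPt.pt inferInstance

/-- Topological freeness: the set of base points of loops without entrances has empty
interior. -/
def IsTopologicallyFree {E0 E1 : Type*} [TopologicalSpace E0] (d r : E1 → E0) : Prop :=
  interior {v : E0 | ∃ (n : ℕ) (hn : 0 < n) (e : Fin n → E1),
      (∀ k : Fin n, d (e k) = r (e ⟨(k.1 + 1) % n, Nat.mod_lt _ hn⟩)) ∧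
      (∀ (k : Fin n) (e' : E1), r e' = r (e k) → e' = e k) ∧
      r (e ⟨0, hn⟩) = v} = ∅

open scoped Classical in
/-- Partial iteration of a partially defined map `σ` with domain `W`:
`sgdsIter σ n x = some y` iff `x ∈ dom (σ^n)` and `σ^n x = y`. -/
noncomputable def sgdsIter {X : Type*} {W : Set X} (σ : ↥W → X) : ℕ → X → Option X
  | 0, x => Option.some x
  | n + 1, x => if h : x ∈ W then sgdsIter σ n (σ ⟨x, h⟩) else none


section GlueLemmas

variable {X : Type*} [TopologicalSpace X] {S B : Set X}

open Classical in
/-- Normal form of an element of the glued space. -/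
noncomputable def glueNF : Glue X S B → X ⊕ ↥S :=
  Quot.lift (Sum.elim Sum.inl (fun s => if s.1 ∈ B then Sum.inl s.1 else Sum.inr s))
    (by
      rintro a b ⟨x, hx, (⟨rfl, rfl⟩ | ⟨rfl, rfl⟩)⟩ <;> simp [hx])

lemma glueNF_inl (x : X) : (glueNF (Glue.inl x : Glue X S B)) = Sum.inl x := rfl

open Classical in
lemma glueNF_inr (s : ↥S) :
    (glueNF (Glue.inr s : Glue X S B)) = if s.1 ∈ B then Sum.inl s.1 else Sum.inr s := by
  simp [glueNF, Glue.inr]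

lemma glue_inl_injective : Function.Injective (Glue.inl : X → Glue X S B) := by
  intro x y h
  have := congrArg glueNF h
  rw [glueNF_inl, glueNF_inl] at this
  exact Sum.inl.inj this

lemma glue_inr_injective : Function.Injective (Glue.inr : ↥S → Glue X S B) := by
  intro s t h
  have := congrArg glueNF h
  rw [glueNF_inr, glueNF_inr] at this
  by_cases hs : s.1 ∈ B <;> by_cases ht : t.1 ∈ B <;> simp [hs, ht] at this
  · exact Subtype.ext this
  · exact this

lemma glue_inl_eq_inr_iff {x : X} {s : ↥S} :
    (Glue.inl x : Glue X S B) = Glue.inr s ↔ x = s.1 ∧ x ∈ B := by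
  constructor
  · intro h
    have := congrArg glueNF h
    rw [glueNF_inl, glueNF_inr] at this
    by_cases hs : s.1 ∈ B <;> simp [hs] at this
    exact ⟨this, this ▸ hs⟩
  · rintro ⟨rfl, hx⟩
    exact Quot.sound ⟨s, hx, Or.inl ⟨rfl, rfl⟩⟩

lemma glue_inr_eq_inl_iff {x : X} {s : ↥S} :
    (Glue.inr s : Glue X S B) = Glue.inl x ↔ x = s.1 ∧ x ∈ B := by
  rw [eq_comm, glue_inl_eq_inr_iff]

lemma inl_mem_image_inl {A : Set X} {x : X} :
    (Glue.inl x : Glue X S B) ∈ Glue.inl '' A ↔ x ∈ A := by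
  constructor
  · rintro ⟨y, hy, h⟩
    rwa [← glue_inl_injective h]
  · intro h; exact ⟨x, h, rfl⟩

lemma inr_mem_image_inl {A : Set X} {s : ↥S} :
    (Glue.inr s : Glue X S B) ∈ Glue.inl '' A ↔ s.1 ∈ A ∧ s.1 ∈ B := by
  constructor
  · rintro ⟨y, hy, h⟩
    obtain ⟨rfl, hB⟩ := glue_inl_eq_inr_iff.mp h
    exact ⟨hy, hB⟩
  · rintro ⟨hA, hB⟩
    exact ⟨s.1, hA, glue_inl_eq_inr_iff.mpr ⟨rfl, hB⟩⟩

lemma inl_mem_image_inr {T : Set ↥S} {x : X} :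
    (Glue.inl x : Glue X S B) ∈ Glue.inr '' T ↔ ∃ s ∈ T, x = s.1 ∧ x ∈ B := by
  constructor
  · rintro ⟨s, hs, h⟩
    obtain ⟨rfl, hB⟩ := glue_inl_eq_inr_iff.mp h.symm
    exact ⟨s, hs, rfl, hB⟩
  · rintro ⟨s, hs, rfl, hB⟩
    exact ⟨s, hs, (glue_inl_eq_inr_iff.mpr ⟨rfl, hB⟩).symm⟩

lemma inr_mem_image_inr {T : Set ↥S} {s : ↥S} :
    (Glue.inr s : Glue X S B) ∈ Glue.inr '' T ↔ s ∈ T := by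
  constructor
  · rintro ⟨t, ht, h⟩
    rwa [← glue_inr_injective h]
  · intro h; exact ⟨s, h, rfl⟩

lemma continuous_glue_inl : Continuous (Glue.inl : X → Glue X S B) :=
  (continuous_quot_mk).comp continuous_inl

lemma continuous_glue_inr : Continuous (Glue.inr : ↥S → Glue X S B) :=
  (continuous_quot_mk).comp continuous_inr

lemma isClosedMap_glue_inl (hB : IsClosed B) :
    IsClosedMap (Glue.inl : X → Glue X S B) := by
  intro C hC
  refine (isQuotientMap_quot_mk :
    Topology.IsQuotientMap (Quot.mk (glueRel S B))).isClosed_preimage.mp ?_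
  rw [isClosed_sum_iff]
  constructor
  · have : Sum.inl ⁻¹' (Quot.mk (glueRel S B) ⁻¹' (Glue.inl '' C)) = C := by
      ext x
      exact inl_mem_image_inl
    erw [this]; exact hC
  · have : Sum.inr ⁻¹' (Quot.mk (glueRel S B) ⁻¹' (Glue.inl '' C)) =
        Subtype.val ⁻¹' (C ∩ B) := by
      ext s
      exact inr_mem_image_inl
    erw [this]
    exact (hC.inter hB).preimage continuous_subtype_val

lemma isClosedEmbedding_glue_inl (hB : IsClosed B) :
    Topology.IsClosedEmbedding (Glue.inl : X → Glue X S B) :=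
  Topology.IsClosedEmbedding.of_continuous_injective_isClosedMap
    continuous_glue_inl glue_inl_injective (isClosedMap_glue_inl hB)

lemma isClosedMap_glue_inr (hS : IsClosed S) (hB : IsClosed B) :
    IsClosedMap (Glue.inr : ↥S → Glue X S B) := by
  intro T hT
  refine (isQuotientMap_quot_mk :
    Topology.IsQuotientMap (Quot.mk (glueRel S B))).isClosed_preimage.mp ?_
  rw [isClosed_sum_iff]
  constructor
  · have : Sum.inl ⁻¹' (Quot.mk (glueRel S B) ⁻¹' (Glue.inr '' T)) =
        (Subtype.val '' T) ∩ B := by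
      ext x
      simp only [Set.mem_preimage, Set.mem_inter_iff, Set.mem_image]
      constructor
      · rintro h
        obtain ⟨s, hs, rfl, hB'⟩ := inl_mem_image_inr.mp h
        exact ⟨⟨s, hs, rfl⟩, hB'⟩
      · rintro ⟨⟨s, hs, rfl⟩, hB'⟩
        exact inl_mem_image_inr.mpr ⟨s, hs, rfl, hB'⟩
    erw [this]
    exact ((hS.isClosedEmbedding_subtypeVal.isClosedMap _ hT).inter hB)
  · have : Sum.inr ⁻¹' (Quot.mk (glueRel S B) ⁻¹' (Glue.inr '' T)) = T := by
      ext s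
      exact inr_mem_image_inr
    erw [this]; exact hT

lemma isClosedEmbedding_glue_inr (hS : IsClosed S) (hB : IsClosed B) :
    Topology.IsClosedEmbedding (Glue.inr : ↥S → Glue X S B) :=
  Topology.IsClosedEmbedding.of_continuous_injective_isClosedMap
    continuous_glue_inr glue_inr_injective (isClosedMap_glue_inr hS hB)

lemma continuous_glueProj : Continuous (glueProj S B) :=
  continuous_quot_lift _ (continuous_id.sumElim continuous_subtype_val)

lemma glueProj_inl (x : X) : glueProj S B (Glue.inl x) = x := rfl

lemma glueProj_inr (s : ↥S) : glueProj S B (Glue.inr s) = s.1 := rfl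

lemma isCompact_glueProj_preimage [T2Space X] (hS : IsClosed S) {K : Set X}
    (hK : IsCompact K) : IsCompact (glueProj S B ⁻¹' K) := by
  have hsub : glueProj S B ⁻¹' K ⊆
      Quot.mk (glueRel S B) '' (Sum.inl '' K ∪ Sum.inr '' (Subtype.val ⁻¹' K)) := by
    intro z
    induction z using Quot.ind with
    | _ w =>
      cases w with
      | inl x => exact fun hx => ⟨Sum.inl x, Or.inl ⟨x, hx, rfl⟩, rfl⟩
      | inr s => exact fun hs => ⟨Sum.inr s, Or.inr ⟨s, hs, rfl⟩, rfl⟩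
  have hcomp : IsCompact
      (Quot.mk (glueRel S B) '' (Sum.inl '' K ∪ Sum.inr '' (Subtype.val ⁻¹' K))) := by
    refine IsCompact.image ?_ continuous_quot_mk
    refine (hK.image continuous_inl).union (IsCompact.image ?_ continuous_inr)
    exact hS.isClosedEmbedding_subtypeVal.isCompact_preimage hK
  exact IsCompact.of_isClosed_subset hcomp
    (hK.isClosed.preimage continuous_glueProj) hsub

lemma isOpen_graphFin {E0 E1 : Type*} [TopologicalSpace E0] [TopologicalSpace E1]
    (r : E1 → E0) : IsOpen (graphFin r) := by
  rw [isOpen_iff_mem_nhds]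
  rintro v ⟨V, hV, hc⟩
  have h1 : v ∈ interior V := mem_interior_iff_mem_nhds.mpr hV
  refine Filter.mem_of_superset (isOpen_interior.mem_nhds h1) ?_
  intro w hw
  exact ⟨V, Filter.mem_of_superset (isOpen_interior.mem_nhds hw) interior_subset, hc⟩

lemma isOpen_graphRg {E0 E1 : Type*} [TopologicalSpace E0] [TopologicalSpace E1]
    (r : E1 → E0) : IsOpen (graphRg r) :=
  (isOpen_graphFin r).sdiff isClosed_closure

end GlueLemmas
lemma glue_cases {X : Type*} {S B : Set X} (z : Glue X S B) :
    (∃ x, z = Glue.inl x) ∨ ∃ s, z = Glue.inr s := by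
  induction z using Quot.ind with
  | _ w =>
    cases w with
    | inl x => exact Or.inl ⟨x, rfl⟩
    | inr s => exact Or.inr ⟨s, rfl⟩
/-- For a topological graph `E` and a closed subset `Y` of `E⁰_rg`,
the graph `E_Y` satisfies `(E_Y⁰)_fin = E⁰_fin ∪ ω(Y)`, `(E_Y⁰)_sce = E⁰_sce ∪ ω(Y)`,
and `(E_Y⁰)_rg = E⁰_rg`. -/
theorem statement5
    {E0 E1 : Type*} [TopologicalSpace E0] [TopologicalSpace E1]
    [T2Space E0] [T2Space E1] [LocallyCompactSpace E0] [LocallyCompactSpace E1]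
    (d r : E1 → E0) (hd : IsLocalHomeomorph d) (hr : Continuous r)
    (Y : Set E0) (hY : Y ⊆ graphRg r) (hYc : closure Y ∩ graphRg r = Y) :
    graphFin (glueR d r Y) =
        (Glue.inl : E0 → Glue E0 (closure Y) (closure Y \ Y)) '' graphFin r ∪
          Set.range (fun v : ↥Y =>
            (Glue.inr ⟨v.1, subset_closure v.2⟩ : Glue E0 (closure Y) (closure Y \ Y))) ∧
      graphSce (glueR d r Y) =
        (Glue.inl : E0 → Glue E0 (closure Y) (closure Y \ Y)) '' graphSce r ∪
          Set.range (fun v : ↥Y =>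
            (Glue.inr ⟨v.1, subset_closure v.2⟩ : Glue E0 (closure Y) (closure Y \ Y))) ∧
      graphRg (glueR d r Y) =
        (Glue.inl : E0 → Glue E0 (closure Y) (closure Y \ Y)) '' graphRg r := by

  have hdc : Continuous d := hd.continuous
  have hSc : IsClosed (closure Y) := isClosed_closure
  have hBeq : closure Y \ Y = closure Y ∩ (graphRg r)ᶜ := by
    ext x
    simp only [Set.mem_diff, Set.mem_inter_iff, Set.mem_compl_iff]
    constructor
    · rintro ⟨hx, hxY⟩
      exact ⟨hx, fun hrg => hxY (hYc ▸ (⟨hx, hrg⟩ : x ∈ closure Y ∩ graphRg r))⟩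
    · rintro ⟨hx, hrg⟩
      exact ⟨hx, fun hxY => hrg (hY hxY)⟩
  have hBc : IsClosed (closure Y \ Y) := by
    rw [hBeq]; exact isClosed_closure.inter (isOpen_graphRg r).isClosed_compl
  have hYB : ∀ x ∈ Y, x ∉ closure Y \ Y := fun x hx h => h.2 hx
  have hBrg : ∀ x ∈ closure Y \ Y, x ∉ graphRg r := by
    intro x hx; rw [hBeq] at hx; exact hx.2
  have hB'c : IsClosed (d ⁻¹' (closure Y \ Y)) := hBc.preimage hdc
  have hS'c : IsClosed (d ⁻¹' closure Y) := hSc.preimage hdc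
  have hgR1 : ∀ e : E1, glueR d r Y (Glue.inl e) = Glue.inl (r e) := fun _ => rfl
  have hgR2 : ∀ s : ↥(d ⁻¹' closure Y), glueR d r Y (Glue.inr s) = Glue.inl (r s.1) :=
    fun _ => rfl
  -- the key compactness transfer
  have key : ∀ v : E0, Glue.inl v ∈ graphFin (glueR d r Y) → v ∈ graphFin r := by
    rintro v ⟨V, hV, hc⟩
    refine ⟨Glue.inl ⁻¹' V, continuous_glue_inl.continuousAt.preimage_mem_nhds hV, ?_⟩
    have h1 : (Glue.inl : E1 → _) '' (r ⁻¹' (Glue.inl ⁻¹' V)) =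
        glueR d r Y ⁻¹' V ∩ ((Glue.inl : E1 → _) '' Set.univ) := by
      ext z
      rcases glue_cases z with ⟨e, rfl⟩ | ⟨s, rfl⟩
      · constructor
        · intro h
          have he : e ∈ r ⁻¹' (Glue.inl ⁻¹' V) := inl_mem_image_inl.mp h
          exact ⟨he, ⟨e, trivial, rfl⟩⟩
        · rintro ⟨h, -⟩
          exact inl_mem_image_inl.mpr h
      · constructor
        · intro h
          obtain ⟨hA, hB⟩ := inr_mem_image_inl.mp h
          refine ⟨?_, inr_mem_image_inl.mpr ⟨trivial, hB⟩⟩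
          exact hA
        · rintro ⟨h, hmem⟩
          exact inr_mem_image_inl.mpr ⟨h, (inr_mem_image_inl.mp hmem).2⟩
    have h2 : IsCompact ((Glue.inl : E1 → Glue E1 (d ⁻¹' closure Y) (d ⁻¹' (closure Y \ Y))) '' (r ⁻¹' (Glue.inl ⁻¹' V))) := by
      rw [h1]
      exact hc.inter_right (isClosedMap_glue_inl hB'c _ isClosed_univ)
    exact ((isClosedEmbedding_glue_inl hB'c).isEmbedding.isCompact_iff).mpr h2
  have hFin : graphFin (glueR d r Y) =
      (Glue.inl : E0 → Glue E0 (closure Y) (closure Y \ Y)) '' graphFin r ∪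
        Set.range (fun v : ↥Y =>
          (Glue.inr ⟨v.1, subset_closure v.2⟩ : Glue E0 (closure Y) (closure Y \ Y))) := by
    apply Set.Subset.antisymm
    · intro z hz
      rcases glue_cases z with ⟨v, rfl⟩ | ⟨s, rfl⟩
      · exact Or.inl ⟨v, key v hz, rfl⟩
      · by_cases hsB : s.1 ∈ closure Y \ Y
        · have he : (Glue.inr s : Glue E0 (closure Y) (closure Y \ Y)) = Glue.inl s.1 :=
            (glue_inl_eq_inr_iff.mpr ⟨rfl, hsB⟩).symm
          rw [he] at hz ⊢
          exact Or.inl ⟨s.1, key s.1 hz, rfl⟩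
        · have hsY : s.1 ∈ Y := by
            by_contra h; exact hsB ⟨s.2, h⟩
          exact Or.inr ⟨⟨s.1, hsY⟩, congrArg Glue.inr (Subtype.ext rfl)⟩
    · rintro z (⟨v, ⟨V, hV, hc⟩, rfl⟩ | ⟨y, rfl⟩)
      · refine ⟨glueProj (closure Y) (closure Y \ Y) ⁻¹' V,
          continuous_glueProj.continuousAt.preimage_mem_nhds hV, ?_⟩
        have hcomm : glueR d r Y ⁻¹' (glueProj (closure Y) (closure Y \ Y) ⁻¹' V) =
            glueProj (d ⁻¹' closure Y) (d ⁻¹' (closure Y \ Y)) ⁻¹' (r ⁻¹' V) := by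
          ext z
          rcases glue_cases z with ⟨e, rfl⟩ | ⟨s, rfl⟩ <;> exact Iff.rfl
        rw [hcomm]
        exact isCompact_glueProj_preimage hS'c hc
      · refine ⟨((Glue.inl : E0 → _) '' Set.univ)ᶜ, ?_, ?_⟩
        · refine ((isClosedMap_glue_inl hBc _ isClosed_univ).isOpen_compl).mem_nhds ?_
          intro hmem
          exact hYB y.1 y.2 (inr_mem_image_inl.mp hmem).2
        · have hempty : glueR d r Y ⁻¹' ((Glue.inl : E0 → _) '' Set.univ)ᶜ = ∅ := by
            apply Set.eq_empty_iff_forall_notMem.mpr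
            intro z hz
            rcases glue_cases z with ⟨e, rfl⟩ | ⟨s, rfl⟩
            · exact hz ⟨r e, trivial, rfl⟩
            · exact hz ⟨r s.1, trivial, rfl⟩
          rw [hempty]
          exact isCompact_empty
  have hrange : Set.range (glueR d r Y) = Glue.inl '' Set.range r := by
    apply Set.Subset.antisymm
    · rintro _ ⟨z, rfl⟩
      rcases glue_cases z with ⟨e, rfl⟩ | ⟨s, rfl⟩
      · exact ⟨r e, ⟨e, rfl⟩, rfl⟩
      · exact ⟨r s.1, ⟨s.1, rfl⟩, rfl⟩
    · rintro _ ⟨x, ⟨e, rfl⟩, rfl⟩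
      exact ⟨Glue.inl e, rfl⟩
  have hSce : graphSce (glueR d r Y) =
      (Glue.inl : E0 → Glue E0 (closure Y) (closure Y \ Y)) '' graphSce r ∪
        Set.range (fun v : ↥Y =>
          (Glue.inr ⟨v.1, subset_closure v.2⟩ : Glue E0 (closure Y) (closure Y \ Y))) := by
    unfold graphSce
    rw [hrange, (isClosedEmbedding_glue_inl hBc).closure_image_eq]
    ext z
    rcases glue_cases z with ⟨x, rfl⟩ | ⟨s, rfl⟩
    · constructor
      · intro h
        exact Or.inl ⟨x, fun hx => h (inl_mem_image_inl.mpr hx), rfl⟩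
      · rintro (⟨x', hx', heq⟩ | ⟨v, hv⟩)
        · obtain rfl := glue_inl_injective heq
          exact fun hC => hx' (inl_mem_image_inl.mp hC)
        · obtain ⟨heq, hB⟩ := glue_inr_eq_inl_iff.mp hv
          exact absurd (heq ▸ hB) (hYB v.1 v.2)
    · by_cases hsB : s.1 ∈ closure Y \ Y
      · constructor
        · intro h
          exact Or.inl (inr_mem_image_inl.mpr
            ⟨fun hC => h (inr_mem_image_inl.mpr ⟨hC, hsB⟩), hsB⟩)
        · rintro (hmem | ⟨v, hv⟩)
          · exact fun hC => (inr_mem_image_inl.mp hmem).1 (inr_mem_image_inl.mp hC).1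
          · have : v.1 = s.1 := congrArg Subtype.val (glue_inr_injective hv)
            exact absurd (this ▸ hsB) (hYB v.1 v.2)
      · have hsY : s.1 ∈ Y := by
          by_contra h; exact hsB ⟨s.2, h⟩
        constructor
        · intro _
          exact Or.inr ⟨⟨s.1, hsY⟩, congrArg Glue.inr (Subtype.ext rfl)⟩
        · intro _ hmem
          exact hsB (inr_mem_image_inl.mp hmem).2
  refine ⟨hFin, hSce, ?_⟩
  have hclY : closure (Set.range (fun v : ↥Y =>
      (Glue.inr ⟨v.1, subset_closure v.2⟩ : Glue E0 (closure Y) (closure Y \ Y)))) =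
      Glue.inr '' (Set.univ : Set ↥(closure Y)) := by
    have h1 : Set.range (fun v : ↥Y =>
        (Glue.inr ⟨v.1, subset_closure v.2⟩ : Glue E0 (closure Y) (closure Y \ Y))) =
        Glue.inr '' (Subtype.val ⁻¹' Y) := by
      ext z
      constructor
      · rintro ⟨v, rfl⟩
        exact ⟨⟨v.1, subset_closure v.2⟩, v.2, rfl⟩
      · rintro ⟨s, hs, rfl⟩
        exact ⟨⟨s.1, hs⟩, congrArg Glue.inr (Subtype.ext rfl)⟩
    rw [h1, (isClosedEmbedding_glue_inr hSc hBc).closure_image_eq]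
    congr 1
    rw [Topology.IsInducing.subtypeVal.closure_eq_preimage_closure_image,
      Subtype.image_preimage_coe, Set.inter_eq_self_of_subset_right subset_closure]
    ext s
    simpa using s.2
  unfold graphRg
  rw [hFin, hSce, closure_union, (isClosedEmbedding_glue_inl hBc).closure_image_eq, hclY]
  ext z
  rcases glue_cases z with ⟨x, rfl⟩ | ⟨s, rfl⟩
  · constructor
    · rintro ⟨h1, h2⟩
      have hxB : x ∉ closure Y \ Y := fun hB =>
        h2 (Or.inr (inl_mem_image_inr.mpr ⟨⟨x, hB.1⟩, trivial, rfl, hB⟩))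
      have hxFin : x ∈ graphFin r := by
        rcases h1 with hm | ⟨v, hv⟩
        · exact inl_mem_image_inl.mp hm
        · obtain ⟨heq, hB⟩ := glue_inr_eq_inl_iff.mp hv
          exact absurd hB hxB
      have hxSce : x ∉ closure (graphSce r) := fun hc =>
        h2 (Or.inl (inl_mem_image_inl.mpr hc))
      exact ⟨x, ⟨hxFin, hxSce⟩, rfl⟩
    · rintro ⟨x', hx', heq⟩
      obtain rfl := glue_inl_injective heq
      refine ⟨Or.inl (inl_mem_image_inl.mpr hx'.1), ?_⟩
      rintro (hm | hm)
      · exact hx'.2 (inl_mem_image_inl.mp hm)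
      · obtain ⟨s, -, rfl, hB⟩ := inl_mem_image_inr.mp hm
        exact hBrg _ hB hx'
  · constructor
    · rintro ⟨-, h2⟩
      exact absurd (Or.inr (inr_mem_image_inr.mpr (Set.mem_univ s))) h2
    · rintro ⟨x', hx', heq⟩
      obtain ⟨rfl, hB⟩ := glue_inl_eq_inr_iff.mp heq
      exact absurd hx' (hBrg _ hB)

end TopGraphAux
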